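/- arXiv:1210.3229 — 3 statements merged into one kernel-verified Lean document; each statement's English description precedes it below -/
import Mathlib

section
/- For every integer i ≥ 0, the map (t₀, …, t_i) ↦ ∫_{Σ_{j=0}^{i−1} t_j}^{Σ_{j=0}^{i} t_j} g(s) · ∏_{k=0}^{i} F(t_k, s − Σ_{j=0}^{k−1} t_j) ds is continuous on the domain {(t₀, …, t_i) : t_j > 0 for all j, and Σ_{j=0}^{i} t_j < Δ} (empty sums being 0). -/
open Real Set Filter MeasureTheory

/-- Conditional ISI density `F t s` given time-to-live `s` of the feedback impulse. -/
noncomputable def F (lam τ t s : ℝ) : ℝ :=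
  if 0 < t ∧ t < s then lam ^ 2 * t * Real.exp (-lam * t)
  else if s ≤ t ∧ t ≤ s + τ then
    (1 + lam * s) * Real.exp (-lam * s) * (lam ^ 2 * (t - s) * Real.exp (-lam * (t - s)))
  else 0

/-- Regular part of the stationary time-to-live density. -/
noncomputable def g (lam A B s : ℝ) : ℝ := A + B * Real.exp (2 * lam * s)

/-- Weight of the singular (Dirac) part of the stationary time-to-live distribution. -/
noncomputable def aC (lam Δ : ℝ) : ℝ :=
  4 * Real.exp (2 * lam * Δ) / ((3 + 2 * lam * Δ) * Real.exp (2 * lam * Δ) + 1)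

/-- `T t p q = Σ_{j=p}^{q-1} t_j` (empty sums are `0`). -/
def T {n : ℕ} (t : Fin n → ℝ) (p q : ℕ) : ℝ :=
  ∑ j : Fin n, if p ≤ (j : ℕ) ∧ (j : ℕ) < q then t j else 0

/-- `Ilow lam Δ τ A B i t` is the term `I_i`, `0 ≤ i ≤ m-1`, of the joint ISI density. -/
noncomputable def Ilow (lam Δ τ A B : ℝ) {m : ℕ} (i : ℕ) (t : Fin (m + 1) → ℝ) : ℝ :=
  (∏ k : Fin (m + 1), if i + 1 ≤ (k : ℕ) then F lam τ (t k) (Δ - T t (i + 1) (k : ℕ)) else 1) *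
    ∫ s in T t 0 i..T t 0 (i + 1),
      g lam A B s *
        ∏ k : Fin (m + 1), if (k : ℕ) ≤ i then F lam τ (t k) (s - T t 0 (k : ℕ)) else 1

/-- `Itop lam Δ τ A B t` is the term `I_m` of the joint ISI density. -/
noncomputable def Itop (lam Δ τ A B : ℝ) {m : ℕ} (t : Fin (m + 1) → ℝ) : ℝ :=
  (∫ s in T t 0 m..Δ, g lam A B s * ∏ k : Fin (m + 1), F lam τ (t k) (s - T t 0 (k : ℕ)))
    + aC lam Δ * ∏ k : Fin (m + 1), F lam τ (t k) (Δ - T t 0 (k : ℕ))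

/-- `J lam Δ τ A B t = Σ_{i=0}^{m} I_i(t)`, the joint density of `m+1` consecutive ISIs. -/
noncomputable def J (lam Δ τ A B : ℝ) {m : ℕ} (t : Fin (m + 1) → ℝ) : ℝ :=
  (∑ i ∈ Finset.range m, Ilow lam Δ τ A B i t) + Itop lam Δ τ A B t

lemma T_nonneg {n : ℕ} (t : Fin n → ℝ) (ht : ∀ j, 0 ≤ t j) (p q : ℕ) : 0 ≤ T t p q :=
  Finset.sum_nonneg fun j _ => by split_ifs; exacts [ht j, le_rfl]

lemma T_mono {n : ℕ} (t : Fin n → ℝ) (ht : ∀ j, 0 ≤ t j) (p : ℕ) {q r : ℕ} (h : q ≤ r) :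
    T t p q ≤ T t p r := by
  apply Finset.sum_le_sum
  intro j _
  by_cases h1 : p ≤ (j : ℕ) ∧ (j : ℕ) < q
  · rw [if_pos h1, if_pos ⟨h1.1, h1.2.trans_le h⟩]
  · rw [if_neg h1]; split_ifs; exacts [ht j, le_rfl]

lemma T_succ {n : ℕ} (t : Fin (n + 1) → ℝ) {k : ℕ} (hk : k ≤ n) :
    T t 0 (k + 1) = T t 0 k + t ⟨k, Nat.lt_succ_of_le hk⟩ := by
  unfold T
  have : ∀ j : Fin (n + 1),
      (if 0 ≤ (j : ℕ) ∧ (j : ℕ) < k + 1 then t j else 0) =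
        (if 0 ≤ (j : ℕ) ∧ (j : ℕ) < k then t j else 0) +
          (if j = ⟨k, Nat.lt_succ_of_le hk⟩ then t j else 0) := by
    intro j
    by_cases hj : (j : ℕ) = k
    · have hje : j = ⟨k, Nat.lt_succ_of_le hk⟩ := Fin.ext hj
      rw [if_pos ⟨Nat.zero_le _, by omega⟩, if_neg (by omega), if_pos hje, zero_add]
    · have hne : j ≠ ⟨k, Nat.lt_succ_of_le hk⟩ := fun h => hj (by rw [h])
      rw [if_neg hne, add_zero]
      by_cases h1 : (j : ℕ) < k
      · rw [if_pos ⟨Nat.zero_le _, by omega⟩, if_pos ⟨Nat.zero_le _, h1⟩]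
      · rw [if_neg (by omega), if_neg (by omega)]
  rw [Finset.sum_congr rfl fun j _ => this j, Finset.sum_add_distrib,
    Finset.sum_ite_eq' Finset.univ (⟨k, Nat.lt_succ_of_le hk⟩ : Fin (n + 1)),
    if_pos (Finset.mem_univ _)]

lemma T_continuous {n : ℕ} (p q : ℕ) : Continuous fun t : Fin n → ℝ => T t p q := by
  unfold T
  exact continuous_finset_sum _ fun j _ => by
    split_ifs; exacts [continuous_apply j, continuous_const]

/-- for every `i ≥ 0`, the integral factor
`(t₀,…,t_i) ↦ ∫_{Σ_{j<i} t_j}^{Σ_{j≤i} t_j} g(s) ∏_{k=0}^{i} F(t_k, s − Σ_{j<k} t_j) ds`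
is continuous on `{t_j > 0 ∀ j, Σ_{j=0}^{i} t_j < Δ}`. -/
theorem stmt4 (lam Δ τ A B : ℝ) (hlam : 0 < lam) (hΔ : 0 < Δ) (hΔτ : Δ < τ) (i : ℕ) :
    ContinuousOn
      (fun t : Fin (i + 1) → ℝ =>
        ∫ s in T t 0 i..T t 0 (i + 1),
          g lam A B s * ∏ k : Fin (i + 1), F lam τ (t k) (s - T t 0 (k : ℕ)))
      {t : Fin (i + 1) → ℝ | (∀ j, 0 < t j) ∧ T t 0 (i + 1) < Δ} := by
  set il : Fin (i + 1) := ⟨i, Nat.lt_succ_self i⟩ with hil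
  set G : (Fin (i + 1) → ℝ) → ℝ → ℝ := fun t u =>
    g lam A B (u + T t 0 i) *
      ∏ k : Fin (i + 1),
        (if (k : ℕ) < i then lam ^ 2 * t k * Real.exp (-lam * t k)
         else (1 + lam * u) * Real.exp (-lam * u) *
           (lam ^ 2 * (t k - u) * Real.exp (-lam * (t k - u)))) with hG
  have hGcont : Continuous (Function.uncurry G) := by
    apply Continuous.mul
    · unfold g
      exact continuous_const.add (continuous_const.mul (Real.continuous_exp.comp
        (continuous_const.mul (continuous_snd.add ((T_continuous 0 i).comp continuous_fst)))))
    · apply continuous_finset_prod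
      intro k _
      split_ifs
      · exact (continuous_const.mul ((continuous_apply k).comp continuous_fst)).mul
          (Real.continuous_exp.comp (continuous_const.mul
            ((continuous_apply k).comp continuous_fst)))
      · exact ((continuous_const.add (continuous_const.mul continuous_snd)).mul
          (Real.continuous_exp.comp (continuous_const.mul continuous_snd))).mul
          ((continuous_const.mul (((continuous_apply k).comp continuous_fst).sub
            continuous_snd)).mul (Real.continuous_exp.comp (continuous_const.mul
            (((continuous_apply k).comp continuous_fst).sub continuous_snd))))
  have key : Continuous fun t : Fin (i + 1) → ℝ => ∫ u in (0 : ℝ)..(t il), G t u :=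
    intervalIntegral.continuous_parametric_intervalIntegral_of_continuous hGcont
      (continuous_apply il)
  apply key.continuousOn.congr
  rintro t ⟨htpos, htΔ⟩
  have ht0 : ∀ j, 0 ≤ t j := fun j => (htpos j).le
  have hT1 : T t 0 (i + 1) = T t 0 i + t il := T_succ t le_rfl
  have hcv := intervalIntegral.integral_comp_add_right (a := (0 : ℝ)) (b := t il)
    (d := T t 0 i) (fun s => g lam A B s * ∏ k : Fin (i + 1), F lam τ (t k) (s - T t 0 (k : ℕ)))
  rw [zero_add, add_comm (t il)] at hcv
  show (∫ s in T t 0 i..T t 0 (i + 1),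
      g lam A B s * ∏ k : Fin (i + 1), F lam τ (t k) (s - T t 0 (k : ℕ))) =
    ∫ u in (0 : ℝ)..(t il), G t u
  rw [hT1, ← hcv]
  refine intervalIntegral.integral_congr_ae (Eventually.of_forall fun u hu => ?_)
  rw [uIoc_of_le (htpos il).le] at hu
  obtain ⟨hu0, hut⟩ := hu
  rw [hG]
  congr 1
  refine Finset.prod_congr rfl fun k _ => ?_
  by_cases hk : (k : ℕ) < i
  · rw [if_pos hk]
    have hkeq : t ⟨(k : ℕ), Nat.lt_succ_of_le hk.le⟩ = t k := by congr 1
    have hTk : T t 0 ((k : ℕ) + 1) = T t 0 (k : ℕ) + t k := by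
      rw [T_succ t hk.le, hkeq]
    have hmono : T t 0 ((k : ℕ) + 1) ≤ T t 0 i := T_mono t ht0 0 hk
    unfold F
    rw [if_pos ⟨htpos k, by linarith⟩]
  · have hki : (k : ℕ) = i := by omega
    have hkl : k = il := Fin.ext (by rw [hki])
    rw [if_neg hk, hki, add_sub_cancel_right]
    have htil : t k ≤ T t 0 (i + 1) := by
      rw [hkl, hT1]
      have := T_nonneg t ht0 0 i
      linarith
    unfold F
    rw [if_neg (fun h => absurd h.2 (not_lt.2 (by rw [hkl]; exact hut))),
      if_pos ⟨by rw [hkl]; exact hut, by linarith⟩]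
end

section
/- For every integer i ≥ 0 and all reals t₀, …, t_i with t_j > 0 for all j and Σ_{j=0}^{i} t_j < Δ, one has the identity ∫_{Σ_{j=0}^{i−1} t_j}^{Σ_{j=0}^{i} t_j} g(s) · ∏_{k=0}^{i} F(t_k, s − Σ_{j=0}^{k−1} t_j) ds = (∏_{k=0}^{i−1} λ²·t_k·exp(−λ·t_k)) · ∫₀^{t_i} (1 + λ·u)·exp(−λ·u) · λ²·(t_i − u)·exp(−λ·(t_i − u)) · g(u + Σ_{j=0}^{i−1} t_j) du (empty sums being 0 and empty products being 1). -/
open Real Set Filter MeasureTheory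

/-- the reduction identity of Appendix C for the integral factor. -/
theorem stmt5 (lam Δ τ A B : ℝ) (hlam : 0 < lam) (hΔ : 0 < Δ) (hΔτ : Δ < τ) (i : ℕ)
    (t : Fin (i + 1) → ℝ) (hpos : ∀ j, 0 < t j) (hsum : T t 0 (i + 1) < Δ) :
    (∫ s in T t 0 i..T t 0 (i + 1),
        g lam A B s * ∏ k : Fin (i + 1), F lam τ (t k) (s - T t 0 (k : ℕ)))
    = (∏ k : Fin (i + 1), if (k : ℕ) < i then lam ^ 2 * t k * Real.exp (-lam * t k) else 1) *
      ∫ u in (0 : ℝ)..t (Fin.last i),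
        (1 + lam * u) * Real.exp (-lam * u) *
          (lam ^ 2 * (t (Fin.last i) - u) * Real.exp (-lam * (t (Fin.last i) - u))) *
          g lam A B (u + T t 0 i) := by
  classical
  have hstep : ∀ (k : ℕ) (hk : k < i + 1), T t 0 (k + 1) = T t 0 k + t ⟨k, hk⟩ := by
    intro k hk
    have e1 : t ⟨k, hk⟩ = ∑ j : Fin (i + 1), if j = ⟨k, hk⟩ then t j else 0 := by simp
    rw [e1, T, T, ← Finset.sum_add_distrib]
    apply Finset.sum_congr rfl
    intro j _
    split_ifs <;> simp_all [Fin.ext_iff] <;> omega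
  have hmono : ∀ p q : ℕ, p ≤ q → T t 0 p ≤ T t 0 q := by
    intro p q hpq
    apply Finset.sum_le_sum
    intro j _
    split_ifs with h1 h2
    · exact le_refl _
    · omega
    · exact (hpos j).le
    · exact le_refl _
  have hT0 : T t 0 0 = 0 := by simp [T]
  have hTnn : ∀ p, 0 ≤ T t 0 p := fun p => hT0 ▸ hmono 0 p (Nat.zero_le p)
  set a := T t 0 i with ha
  set b := T t 0 (i + 1) with hbdef
  have hb : b = a + t (Fin.last i) := hstep i (Nat.lt_succ_self i)
  have htL : 0 < t (Fin.last i) := hpos _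
  have hab : a < b := by rw [hb]; linarith
  have hbΔ : b < Δ := hsum
  have hanng : 0 ≤ a := hTnn i
  have htLτ : t (Fin.last i) < τ := by linarith
  set P := (∏ k : Fin (i + 1),
      if (k : ℕ) < i then lam ^ 2 * t k * Real.exp (-lam * t k) else 1) with hP
  set f : ℝ → ℝ := fun u =>
    (1 + lam * u) * Real.exp (-lam * u) *
      (lam ^ 2 * (t (Fin.last i) - u) * Real.exp (-lam * (t (Fin.last i) - u))) *
      g lam A B (u + a) with hf
  have key : ∀ s ∈ Set.Ioc a b,
      g lam A B s * ∏ k : Fin (i + 1), F lam τ (t k) (s - T t 0 (k : ℕ)) = P * f (s - a) := by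
    intro s hs
    obtain ⟨hsa, hsb⟩ := hs
    have hFlast : F lam τ (t (Fin.last i)) (s - a)
        = (1 + lam * (s - a)) * Real.exp (-lam * (s - a)) *
          (lam ^ 2 * (t (Fin.last i) - (s - a)) *
            Real.exp (-lam * (t (Fin.last i) - (s - a)))) := by
      rw [F, if_neg, if_pos]
      · refine ⟨by linarith [hb], by linarith⟩
      · rintro ⟨_, h⟩
        have : s - a ≤ t (Fin.last i) := by linarith [hb]
        linarith
    have hprod : (∏ k : Fin (i + 1), F lam τ (t k) (s - T t 0 (k : ℕ)))
        = P * F lam τ (t (Fin.last i)) (s - a) := by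
      rw [hP, Fin.prod_univ_castSucc, Fin.prod_univ_castSucc]
      simp only [Fin.val_last, lt_self_iff_false, if_false, mul_one, Fin.coe_castSucc]
      congr 1
      apply Finset.prod_congr rfl
      intro k _
      have hk : (k : ℕ) < i := k.isLt
      rw [if_pos hk, F, if_pos]
      refine ⟨hpos _, ?_⟩
      have h1 : T t 0 ((k : ℕ) + 1) ≤ a := hmono _ i (by omega)
      have h2 : T t 0 ((k : ℕ) + 1) = T t 0 (k : ℕ) + t ⟨(k : ℕ), by omega⟩ :=
        hstep (k : ℕ) (by omega)
      have h3 : t k.castSucc = t ⟨(k : ℕ), by omega⟩ := rfl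
      rw [h3]
      linarith
    rw [hprod, hFlast, hf]
    simp only
    have hsaa : s - a + a = s := by ring
    rw [hsaa]
    ring
  have h1 : (∫ s in a..b, g lam A B s * ∏ k : Fin (i + 1), F lam τ (t k) (s - T t 0 (k : ℕ)))
      = ∫ s in a..b, P * f (s - a) := by
    apply intervalIntegral.integral_congr_ae
    filter_upwards with s hs
    rw [Set.uIoc_of_le hab.le] at hs
    exact key s hs
  rw [h1]
  have h2 : (∫ s in a..b, P * f (s - a)) = P * ∫ s in a..b, f (s - a) :=
    intervalIntegral.integral_const_mul P _
  rw [h2]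
  congr 1
  have h3 : (∫ s in a..b, f (s - a)) = ∫ u in (a - a)..(b - a), f u :=
    intervalIntegral.integral_comp_sub_right f a
  have h4 : a - a = 0 := sub_self a
  have h5 : b - a = t (Fin.last i) := by rw [hb]; ring
  rw [h3, h4, h5]
end

section
/- Let m ≥ 1 be an integer, i ∈ {0, …, m−1}, and let t₀, …, t_{m−1} be reals with t_j > 0 for all j and Σ_{j=0}^{m−1} t_j < Δ; set d_i = Δ − Σ_{j=i+1}^{m−1} t_j > 0. Then the one-sided limits of t_m ↦ I_i(t₀, …, t_{m−1}, t_m) at t_m = d_i exist, and (limit from below) − (limit from above) = λ²·d_i·exp(−λ·d_i) · (∏_{k=i+1}^{m−1} λ²·t_k·exp(−λ·t_k)) · ∫_{Σ_{j=0}^{i−1} t_j}^{Σ_{j=0}^{i} t_j} g(s) · ∏_{k=0}^{i} F(t_k, s − Σ_{j=0}^{k−1} t_j) ds. -/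
open Real Set Filter MeasureTheory

lemma T_snoc {m : ℕ} (t : Fin m → ℝ) (x : ℝ) (p q : ℕ) :
    T (Fin.snoc t x) p q = T t p q + (if p ≤ m ∧ m < q then x else 0) := by
  unfold T
  rw [Fin.sum_univ_castSucc]
  simp [Fin.snoc_castSucc, Fin.snoc_last]

lemma F_of_lt (lam τ t s : ℝ) (h1 : 0 < t) (h2 : t < s) :
    F lam τ t s = lam ^ 2 * t * Real.exp (-lam * t) := by
  unfold F; rw [if_pos ⟨h1, h2⟩]

/-- jump of `t_m ↦ I_i(t₀,…,t_{m−1},t_m)` across `t_m = d_i = Δ − Σ_{j=i+1}^{m−1} t_j`. -/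
theorem stmt9 (lam Δ τ A B : ℝ) (hlam : 0 < lam) (hΔ : 0 < Δ) (hΔτ : Δ < τ)
    (m : ℕ) (hm : 1 ≤ m) (i : ℕ) (hi : i < m) (t : Fin m → ℝ)
    (hpos : ∀ j, 0 < t j) (hsum : T t 0 m < Δ) :
    0 < Δ - T t (i + 1) m ∧
    ∃ L₁ L₂ : ℝ,
      Filter.Tendsto (fun x => Ilow lam Δ τ A B i (Fin.snoc t x))
        (nhdsWithin (Δ - T t (i + 1) m) (Set.Iio (Δ - T t (i + 1) m))) (nhds L₁) ∧
      Filter.Tendsto (fun x => Ilow lam Δ τ A B i (Fin.snoc t x))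
        (nhdsWithin (Δ - T t (i + 1) m) (Set.Ioi (Δ - T t (i + 1) m))) (nhds L₂) ∧
      L₁ - L₂ =
        lam ^ 2 * (Δ - T t (i + 1) m) * Real.exp (-lam * (Δ - T t (i + 1) m)) *
          (∏ k : Fin m, if i + 1 ≤ (k : ℕ) then lam ^ 2 * t k * Real.exp (-lam * t k) else 1) *
          ∫ s in T t 0 i..T t 0 (i + 1),
            g lam A B s *
              ∏ k : Fin m, if (k : ℕ) ≤ i then F lam τ (t k) (s - T t 0 (k : ℕ)) else 1 := by
  have hTle : T t (i + 1) m ≤ T t 0 m := by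
    unfold T
    refine Finset.sum_le_sum fun j _ => ?_
    by_cases h : i + 1 ≤ (j : ℕ) ∧ (j : ℕ) < m
    · rw [if_pos h, if_pos ⟨Nat.zero_le _, h.2⟩]
    · rw [if_neg h]
      split_ifs with h2
      · exact (hpos j).le
      · exact le_refl 0
  set d : ℝ := Δ - T t (i + 1) m with hd_def
  have hd : 0 < d := by simp only [hd_def]; linarith
  refine ⟨hd, ?_⟩
  set C : ℝ := ∏ k : Fin m,
      if i + 1 ≤ (k : ℕ) then F lam τ (t k) (Δ - T t (i + 1) (k : ℕ)) else 1 with hC_def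
  set Int : ℝ := ∫ s in T t 0 i..T t 0 (i + 1),
      g lam A B s * ∏ k : Fin m, if (k : ℕ) ≤ i then F lam τ (t k) (s - T t 0 (k : ℕ)) else 1
    with hInt_def
  have hTm : T t 0 m = ∑ j : Fin m, t j := by
    unfold T
    exact Finset.sum_congr rfl fun j _ => if_pos ⟨Nat.zero_le _, j.isLt⟩
  have key : ∀ x : ℝ, Ilow lam Δ τ A B i (Fin.snoc t x) = (C * Int) * F lam τ x d := by
    intro x
    unfold Ilow
    have hTi : T (Fin.snoc t x) 0 i = T t 0 i := by
      rw [T_snoc, if_neg (by omega)]; ring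
    have hTi1 : T (Fin.snoc t x) 0 (i + 1) = T t 0 (i + 1) := by
      rw [T_snoc, if_neg (by omega)]; ring
    have hprod : (∏ k : Fin (m + 1),
        if i + 1 ≤ (k : ℕ) then
          F lam τ ((Fin.snoc t x : Fin (m + 1) → ℝ) k) (Δ - T (Fin.snoc t x) (i + 1) (k : ℕ)) else 1)
        = C * F lam τ x d := by
      rw [Fin.prod_univ_castSucc]
      congr 1
      · refine Finset.prod_congr rfl fun k _ => ?_
        have hT : T (Fin.snoc t x) (i + 1) ((k : ℕ)) = T t (i + 1) (k : ℕ) := by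
          rw [T_snoc, if_neg (by omega)]; ring
        simp only [Fin.coe_castSucc, Fin.snoc_castSucc, hT]
      · have hT : T (Fin.snoc t x) (i + 1) m = T t (i + 1) m := by
          rw [T_snoc, if_neg (by omega)]; ring
        rw [if_pos (by simp only [Fin.val_last]; omega), Fin.snoc_last]
        simp only [Fin.val_last, hT]
        rfl
    have hint : (∫ s in T (Fin.snoc t x) 0 i..T (Fin.snoc t x) 0 (i + 1),
        g lam A B s * ∏ k : Fin (m + 1),
          if (k : ℕ) ≤ i then F lam τ ((Fin.snoc t x : Fin (m + 1) → ℝ) k) (s - T (Fin.snoc t x) 0 (k : ℕ)) else 1)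
        = Int := by
      rw [hTi, hTi1, hInt_def]
      refine intervalIntegral.integral_congr fun s _ => ?_
      congr 1
      rw [Fin.prod_univ_castSucc, if_neg (by simp only [Fin.val_last]; omega), mul_one]
      refine Finset.prod_congr rfl fun k _ => ?_
      have hT : T (Fin.snoc t x) 0 ((k : ℕ)) = T t 0 (k : ℕ) := by
        rw [T_snoc, if_neg (by omega)]; ring
      simp only [Fin.coe_castSucc, Fin.snoc_castSucc, hT]
    rw [hprod, hint]; ring
  have hC : C = ∏ k : Fin m,
      if i + 1 ≤ (k : ℕ) then lam ^ 2 * t k * Real.exp (-lam * t k) else 1 := by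
    refine Finset.prod_congr rfl fun k _ => ?_
    split_ifs with h
    · refine F_of_lt _ _ _ _ (hpos k) ?_
      have hle : T t (i + 1) (k : ℕ) + t k ≤ T t 0 m := by
        rw [hTm]
        have : T t (i + 1) (k : ℕ) + t k
            = ∑ j : Fin m, ((if i + 1 ≤ (j : ℕ) ∧ (j : ℕ) < (k : ℕ) then t j else 0)
              + (if j = k then t k else 0)) := by
          rw [Finset.sum_add_distrib, Finset.sum_ite_eq' Finset.univ k (fun _ => t k),
            if_pos (Finset.mem_univ k)]
          rfl
        rw [this]
        refine Finset.sum_le_sum fun j _ => ?_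
        by_cases hjk : j = k
        · subst hjk
          rw [if_neg (by omega), if_pos rfl]; simp
        · rw [if_neg hjk, add_zero]
          split_ifs
          · exact le_rfl
          · exact (hpos j).le
      linarith
    · rfl
  refine ⟨(C * Int) * (lam ^ 2 * d * Real.exp (-lam * d)), 0, ?_, ?_, ?_⟩
  · have hcont : Filter.Tendsto (fun x : ℝ => (C * Int) * (lam ^ 2 * x * Real.exp (-lam * x)))
        (nhdsWithin d (Set.Iio d)) (nhds ((C * Int) * (lam ^ 2 * d * Real.exp (-lam * d)))) := by
      refine Filter.Tendsto.mono_left ?_ nhdsWithin_le_nhds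
      exact (Continuous.tendsto (by fun_prop) d)
    refine hcont.congr' ?_
    filter_upwards [self_mem_nhdsWithin,
      eventually_nhdsWithin_of_eventually_nhds (eventually_gt_nhds hd)] with x hx hx0
    rw [key x, F_of_lt _ _ _ _ hx0 hx]
  · have hval : (C * Int) * ((1 + lam * d) * Real.exp (-lam * d)
        * (lam ^ 2 * (d - d) * Real.exp (-lam * (d - d)))) = 0 := by
      simp
    have hcont : Filter.Tendsto (fun x : ℝ => (C * Int) * ((1 + lam * d) * Real.exp (-lam * d)
        * (lam ^ 2 * (x - d) * Real.exp (-lam * (x - d)))))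
        (nhdsWithin d (Set.Ioi d)) (nhds (0 : ℝ)) := by
      rw [← hval]
      refine Filter.Tendsto.mono_left ?_ nhdsWithin_le_nhds
      exact (Continuous.tendsto (by fun_prop) d)
    refine hcont.congr' ?_
    have hτ : d < d + τ := by linarith
    filter_upwards [self_mem_nhdsWithin,
      eventually_nhdsWithin_of_eventually_nhds (eventually_lt_nhds hτ)] with x hx hxτ
    rw [key x]
    unfold F
    rw [if_neg (by push_neg; intro _; exact le_of_lt hx), if_pos ⟨le_of_lt hx, le_of_lt hxτ⟩]
  · rw [hC]; ring
end
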